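/- Let h: ℝⁿ → ℝ be continuously differentiable and let x(t) solve ẋ = f(x) (f locally Lipschitz). Suppose B(x) = −log(h(x)/(1+h(x))) satisfies dB/dt ≤ γ/B along the solution for some γ > 0. If h(x(t₀)) > 0, then for all t ≥ t₀ in the interval of existence, h(x(t)) ≥ 1 / (−1 + exp(√(2γ(t−t₀) + (log((h(x₀)+1)/h(x₀)))²))), and in particular h(x(t)) > 0. -/

import Mathlib

/-- Logarithmic barrier B = −log(h/(1+h)) with Ḃ ≤ γ/B yields an explicit positive
lower bound on h along the solution. -/
theorem stmt8 (n : ℕ) (f : (Fin n → ℝ) → (Fin n → ℝ)) (hf : LocallyLipschitz f)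
    (h : (Fin n → ℝ) → ℝ) (hh : ContDiff ℝ 1 h)
    (t₀ T γ : ℝ) (hγ : 0 < γ) (x : ℝ → Fin n → ℝ)
    (hx : ∀ t ∈ Set.Icc t₀ T, HasDerivAt x (f (x t)) t)
    (h0 : 0 < h (x t₀))
    (hB : ∀ t ∈ Set.Icc t₀ T, ∃ d : ℝ,
      HasDerivAt (fun s => -Real.log (h (x s) / (1 + h (x s)))) d t ∧
      d ≤ γ / (-Real.log (h (x t) / (1 + h (x t))))) :
    ∀ t ∈ Set.Icc t₀ T,
      h (x t) ≥ 1 / (-1 + Real.exp (Real.sqrt (2 * γ * (t - t₀) +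
        (Real.log ((h (x t₀) + 1) / h (x t₀))) ^ 2))) ∧ 0 < h (x t) := by
  intro t ht
  have ht₀T : t₀ ≤ T := le_trans ht.1 ht.2
  set B : ℝ → ℝ := fun s => -Real.log (h (x s) / (1 + h (x s))) with hBdef
  choose! d hd hdle using hB
  have hdle' : ∀ s ∈ Set.Icc t₀ T, d s ≤ γ / B s := hdle
  have hB₀ : B t₀ = Real.log ((h (x t₀) + 1) / h (x t₀)) := by
    show -Real.log _ = _
    rw [← Real.log_inv, inv_div, add_comm]
  have hB₀pos : 0 < B t₀ := by
    rw [hB₀]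
    apply Real.log_pos
    rw [lt_div_iff₀ h0]; linarith
  -- the comparison function
  have hcpos : ∀ s, t₀ ≤ s → 0 < 2 * γ * (s - t₀) + (B t₀) ^ 2 := by
    intro s hs
    nlinarith [pow_pos hB₀pos 2]
  have hψderiv : ∀ ε : ℝ, ∀ s, t₀ ≤ s →
      HasDerivAt (fun u => Real.sqrt (2 * γ * (u - t₀) + (B t₀) ^ 2) + ε * (u - t₀ + 1))
        (γ / Real.sqrt (2 * γ * (s - t₀) + (B t₀) ^ 2) + ε) s := by
    intro ε s hs
    have h1 : HasDerivAt (fun u => 2 * γ * (u - t₀) + (B t₀) ^ 2) (2 * γ) s := by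
      simpa using (((hasDerivAt_id s).sub_const t₀).const_mul (2 * γ)).add_const ((B t₀) ^ 2)
    have h2 := (Real.hasDerivAt_sqrt (ne_of_gt (hcpos s hs))).comp s h1
    have h3 : HasDerivAt (fun u => ε * (u - t₀ + 1)) ε s := by
      simpa using (((hasDerivAt_id s).sub_const t₀).add_const (1 : ℝ)).const_mul ε
    convert h2.add h3 using 1
    have hsq : Real.sqrt (2 * γ * (s - t₀) + (B t₀) ^ 2) ≠ 0 :=
      ne_of_gt (Real.sqrt_pos.mpr (hcpos s hs))
    case e'_4 => rfl
    case e'_5 => rfl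
    case e'_8 => rfl
    rw [div_mul_eq_mul_div, one_mul, mul_div_mul_left _ _ (two_ne_zero)]
  -- comparison inequality with ε-slack
  have comp : ∀ ε : ℝ, 0 < ε → ∀ s ∈ Set.Icc t₀ T,
      B s ≤ Real.sqrt (2 * γ * (s - t₀) + (B t₀) ^ 2) + ε * (s - t₀ + 1) := by
    intro ε hε s hs
    refine image_le_of_deriv_right_lt_deriv_boundary'
      (f := B) (f' := d)
      (B := fun u => Real.sqrt (2 * γ * (u - t₀) + (B t₀) ^ 2) + ε * (u - t₀ + 1))
      (B' := fun u => γ / Real.sqrt (2 * γ * (u - t₀) + (B t₀) ^ 2) + ε)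
      ?_ ?_ ?_ ?_ ?_ ?_ hs
    · exact fun u hu => (hd u hu).continuousAt.continuousWithinAt
    · exact fun u hu => (hd u ⟨hu.1, le_of_lt hu.2⟩).hasDerivWithinAt
    · beta_reduce
      rw [show 2 * γ * (t₀ - t₀) + (B t₀) ^ 2 = (B t₀) ^ 2 by ring, Real.sqrt_sq hB₀pos.le]
      nlinarith
    · intro u hu
      exact ((hψderiv ε u hu.1).continuousAt).continuousWithinAt
    · intro u hu
      exact (hψderiv ε u hu.1).hasDerivWithinAt
    · intro u hu heq
      beta_reduce at heq
      have huI : u ∈ Set.Icc t₀ T := ⟨hu.1, le_of_lt hu.2⟩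
      have hsqpos : 0 < Real.sqrt (2 * γ * (u - t₀) + (B t₀) ^ 2) :=
        Real.sqrt_pos.mpr (hcpos u hu.1)
      have hBge : Real.sqrt (2 * γ * (u - t₀) + (B t₀) ^ 2) ≤ B u := by
        rw [heq]
        nlinarith [hu.1]
      have hBpos : 0 < B u := lt_of_lt_of_le hsqpos hBge
      have h1 : d u ≤ γ / B u := hdle' u huI
      have h2 : γ / B u ≤ γ / Real.sqrt (2 * γ * (u - t₀) + (B t₀) ^ 2) := by
        apply div_le_div_of_nonneg_left hγ.le hsqpos hBge
      linarith
  -- pass to the limit ε → 0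
  have key : ∀ s ∈ Set.Icc t₀ T, B s ≤ Real.sqrt (2 * γ * (s - t₀) + (B t₀) ^ 2) := by
    intro s hs
    refine le_of_forall_pos_le_add ?_
    intro ε hε
    have hden : 0 < s - t₀ + 1 := by linarith [hs.1]
    have := comp (ε / (s - t₀ + 1)) (div_pos hε hden) s hs
    calc B s ≤ Real.sqrt (2 * γ * (s - t₀) + (B t₀) ^ 2) + ε / (s - t₀ + 1) * (s - t₀ + 1) :=
          this
      _ = Real.sqrt (2 * γ * (s - t₀) + (B t₀) ^ 2) + ε := by
          rw [div_mul_cancel₀ _ (ne_of_gt hden)]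
  -- continuity of h ∘ x
  have hhx_cont : ContinuousOn (fun s => h (x s)) (Set.Icc t₀ T) := fun s hs =>
    ((hh.continuous.continuousAt).comp (hx s hs).continuousAt).continuousWithinAt
  -- positivity of h along the trajectory
  have hpos : ∀ s ∈ Set.Icc t₀ T, 0 < h (x s) := by
    by_contra hcon
    push_neg at hcon
    obtain ⟨t₁, ht₁, ht₁le⟩ := hcon
    set M := Real.sqrt (2 * γ * (T - t₀) + (B t₀) ^ 2) with hMdef
    set v := min (Real.exp (-M) / 2) (h (x t₀)) with hvdef
    have hv0 : 0 < v := lt_min (by positivity) h0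
    have hvlt : v < Real.exp (-M) := lt_of_le_of_lt (min_le_left _ _)
      (by linarith [Real.exp_pos (-M)])
    have hvmem : v ∈ Set.Icc (h (x t₁)) (h (x t₀)) := ⟨by linarith, min_le_right _ _⟩
    obtain ⟨s, hsmem, hsv⟩ := intermediate_value_Icc' ht₁.1
      (hhx_cont.mono (Set.Icc_subset_Icc_right ht₁.2)) hvmem
    beta_reduce at hsv
    have hsIcc : s ∈ Set.Icc t₀ T := ⟨hsmem.1, hsmem.2.trans ht₁.2⟩
    have hBs := key s hsIcc
    have h1v : (0:ℝ) < 1 + v := by linarith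
    have hBs_eq : B s = Real.log ((1 + v) / v) := by
      show -Real.log _ = _
      rw [hsv, ← Real.log_inv, inv_div]
    have hexp : Real.exp M * Real.exp (-M) = 1 := by
      rw [← Real.exp_add]; simp
    have hMlt : M < B s := by
      rw [hBs_eq]
      rw [show M = Real.log (Real.exp M) from (Real.log_exp M).symm]
      apply Real.log_lt_log (Real.exp_pos M)
      rw [lt_div_iff₀ hv0]
      nlinarith [Real.exp_pos M]
    have hMle : Real.sqrt (2 * γ * (s - t₀) + (B t₀) ^ 2) ≤ M := by
      apply Real.sqrt_le_sqrt
      nlinarith [hsIcc.2]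
    linarith
  -- conclusion
  have hpt := hpos t ht
  refine ⟨?_, hpt⟩
  rw [← hB₀]
  have h1t : (0:ℝ) < 1 + h (x t) := by linarith
  have hBt_eq : B t = Real.log ((1 + h (x t)) / h (x t)) := by
    show -Real.log _ = _
    rw [← Real.log_inv, inv_div]
  have hBt := key t ht
  have hSge : B t₀ ≤ Real.sqrt (2 * γ * (t - t₀) + (B t₀) ^ 2) := by
    rw [show B t₀ = Real.sqrt ((B t₀) ^ 2) from (Real.sqrt_sq hB₀pos.le).symm]
    apply Real.sqrt_le_sqrt
    nlinarith [ht.1, (Real.sq_sqrt (sq_nonneg (B t₀))).symm]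
  set S := Real.sqrt (2 * γ * (t - t₀) + (B t₀) ^ 2) with hSdef
  have hSpos : 0 < S := lt_of_lt_of_le hB₀pos hSge
  have hexpS : 1 < Real.exp S := by
    rw [show (1:ℝ) = Real.exp 0 from (Real.exp_zero).symm]
    exact Real.exp_lt_exp.mpr hSpos
  have hE : 0 < -1 + Real.exp S := by linarith
  have hlog : (1 + h (x t)) / h (x t) ≤ Real.exp S := by
    rw [← Real.log_le_iff_le_exp (div_pos h1t hpt), ← hBt_eq]
    exact hBt
  rw [ge_iff_le, div_le_iff₀ hE]
  rw [div_le_iff₀ hpt] at hlog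
  nlinarith
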